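/- arXiv:1302.6230 — 2 statements merged into one kernel-verified Lean document; each statement's English description precedes it below -/
import Mathlib

section
/- Let L be a finite set and R a finite set of relations each of the form R_i = S_i with R_i, S_i nonempty positive words in L, let G = ⟨L | R⟩ be the presented group and G⁺ = ⟨L | R⟩_mo the presented monoid on the same presentation. Assume G⁺ is atomic, cancellative, and possesses a fundamental element. Then the localization homomorphism π : G⁺ → G (the canonical monoid homomorphism sending each generator of G⁺ to the corresponding generator of G) is injective. -/
/-- An element of a monoid is an *atom* if it is `≠ 1` and indecomposable. -/
def IsAtomElem {M : Type*} [Monoid M] (a : M) : Prop :=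
  a ≠ 1 ∧ ∀ b c : M, a = b * c → b = 1 ∨ c = 1

/-- `Δ` is a *fundamental element*: there is a permutation `σ` of the set of atoms such that
for every atom `a` there is `Δₐ` with `Δ = a·Δₐ = Δₐ·σ(a)`. -/
def IsFundamental {M : Type*} [Monoid M] (Δ : M) : Prop :=
  ∃ σ : Equiv.Perm {a : M // IsAtomElem a}, ∀ a : {a : M // IsAtomElem a},
    ∃ Δa : M, Δ = (a : M) * Δa ∧ Δ = Δa * ((σ a : {a : M // IsAtomElem a}) : M)

/-- The canonical monoid homomorphism from the free monoid to the free group. -/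
def iotaFG (α : Type*) : FreeMonoid α →* FreeGroup α := FreeMonoid.lift FreeGroup.of

/-- The group relators associated to a monoid presentation: each relation `w₁ = w₂`
becomes the relator `(ι w₁)⁻¹ · ι w₂`, so that `G = ⟨L ∣ R⟩` is the group with the same
presentation as the monoid `G⁺ = ⟨L ∣ R⟩₊`. -/
def grels {α : Type*} (rels : FreeMonoid α → FreeMonoid α → Prop) : Set (FreeGroup α) :=
  {x | ∃ w₁ w₂, rels w₁ w₂ ∧ x = (iotaFG α w₁)⁻¹ * iotaFG α w₂}

theorem grels_hold {α : Type*} (rels : FreeMonoid α → FreeMonoid α → Prop) :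
    ∀ a b : FreeMonoid α, rels a b →
      FreeMonoid.lift (PresentedGroup.of (rels := grels rels)) a =
      FreeMonoid.lift (PresentedGroup.of (rels := grels rels)) b := by
  intro a b h
  have key : FreeMonoid.lift (PresentedGroup.of (rels := grels rels)) =
      (PresentedGroup.mk (grels rels)).comp (iotaFG α) :=
    FreeMonoid.hom_eq (fun x => rfl)
  rw [key]
  show QuotientGroup.mk (iotaFG α a) = QuotientGroup.mk (iotaFG α b)
  exact QuotientGroup.eq.mpr (Subgroup.subset_normalClosure ⟨a, b, h, rfl⟩)

/-- The localization homomorphism `π : G⁺ → G` from the presented monoid to the group with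
the same presentation, sending each generator to the corresponding generator. -/
def locHom {α : Type*} (rels : FreeMonoid α → FreeMonoid α → Prop) :
    PresentedMonoid rels →* PresentedGroup (grels rels) :=
  PresentedMonoid.lift PresentedGroup.of (grels_hold rels)

section Aux
variable {M : Type*} [Monoid M]

lemma exists_atom_list
    (hatomic : ∃ ν : M → ℕ, (∀ α, ν α = 0 ↔ α = 1) ∧ ∀ α β, ν α + ν β ≤ ν (α * β)) :
    ∀ α : M, ∃ l : List M, (∀ x ∈ l, IsAtomElem x) ∧ α = l.prod := by
  obtain ⟨ν, hν0, hνadd⟩ := hatomic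
  suffices H : ∀ n α, ν α = n → ∃ l : List M, (∀ x ∈ l, IsAtomElem x) ∧ α = l.prod from
    fun α => H (ν α) α rfl
  intro n
  induction n using Nat.strong_induction_on with
  | _ n ih =>
    intro α hα
    by_cases h1 : α = 1
    · exact ⟨[], by simp, by simp [h1]⟩
    by_cases hat : IsAtomElem α
    · exact ⟨[α], by simp [hat], by simp⟩
    · rw [IsAtomElem] at hat; push_neg at hat
      obtain ⟨b, c, hbc, hb, hc⟩ := hat h1
      have hbν : ν b ≠ 0 := fun h => hb ((hν0 b).mp h)
      have hcν : ν c ≠ 0 := fun h => hc ((hν0 c).mp h)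
      have hsum := hνadd b c
      rw [← hbc, hα] at hsum
      obtain ⟨lb, hlb, hlbp⟩ := ih (ν b) (by omega) b rfl
      obtain ⟨lc, hlc, hlcp⟩ := ih (ν c) (by omega) c rfl
      refine ⟨lb ++ lc, ?_, by simp [hbc, ← hlbp, ← hlcp]⟩
      intro x hx
      rcases List.mem_append.mp hx with h | h
      exacts [hlb x h, hlc x h]

lemma fund_atom {Δ : M} (hΔ : IsFundamental Δ) {a : M} (ha : IsAtomElem a) :
    ∃ b Δ' : M, Δ = Δ' * a ∧ Δ * a = b * Δ := by
  obtain ⟨σ, hσ⟩ := hΔ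
  obtain ⟨Δb, h1, h2⟩ := hσ (σ.symm ⟨a, ha⟩)
  rw [Equiv.apply_symm_apply] at h2
  refine ⟨(σ.symm ⟨a, ha⟩ : {a : M // IsAtomElem a}), Δb, h2, ?_⟩
  conv_lhs => rw [h1]
  rw [mul_assoc]
  conv_rhs => rw [h2]

lemma fund_comm
    (hatomic : ∃ ν : M → ℕ, (∀ α, ν α = 0 ↔ α = 1) ∧ ∀ α β, ν α + ν β ≤ ν (α * β))
    {Δ : M} (hΔ : IsFundamental Δ) (γ : M) : ∃ γ' : M, Δ * γ = γ' * Δ := by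
  obtain ⟨l, hl, rfl⟩ := exists_atom_list hatomic γ
  induction l with
  | nil => exact ⟨1, by simp⟩
  | cons a l ih =>
    obtain ⟨γ', hγ'⟩ := ih (fun x hx => hl x (List.mem_cons_of_mem _ hx))
    obtain ⟨b, Δ', _, hcomm⟩ := fund_atom hΔ (hl a List.mem_cons_self)
    refine ⟨b * γ', ?_⟩
    rw [List.prod_cons, ← mul_assoc, hcomm, mul_assoc, hγ', ← mul_assoc]

lemma fund_pow_rdiv
    (hatomic : ∃ ν : M → ℕ, (∀ α, ν α = 0 ↔ α = 1) ∧ ∀ α β, ν α + ν β ≤ ν (α * β))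
    {Δ : M} (hΔ : IsFundamental Δ) :
    ∀ l : List M, (∀ x ∈ l, IsAtomElem x) → ∃ γ : M, Δ ^ l.length = γ * l.prod := by
  intro l hl
  induction l with
  | nil => exact ⟨1, by simp⟩
  | cons a l ih =>
    obtain ⟨γ, hγ⟩ := ih (fun x hx => hl x (List.mem_cons_of_mem _ hx))
    obtain ⟨γ', hγ'⟩ := fund_comm hatomic hΔ γ
    obtain ⟨b, Δ', hΔ', _⟩ := fund_atom hΔ (hl a List.mem_cons_self)
    refine ⟨γ' * Δ', ?_⟩
    rw [List.length_cons, pow_succ', hγ, ← mul_assoc, hγ', List.prod_cons,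
      mul_assoc, mul_assoc, ← mul_assoc Δ', ← hΔ']

lemma common_left_mul
    (hatomic : ∃ ν : M → ℕ, (∀ α, ν α = 0 ↔ α = 1) ∧ ∀ α β, ν α + ν β ≤ ν (α * β))
    {Δ : M} (hΔ : IsFundamental Δ) (r s : M) : ∃ r' s' : M, s' * r = r' * s := by
  obtain ⟨lr, hlr, rfl⟩ := exists_atom_list hatomic r
  obtain ⟨ls, hls, rfl⟩ := exists_atom_list hatomic s
  obtain ⟨γr, hγr⟩ := fund_pow_rdiv hatomic hΔ lr hlr
  obtain ⟨γs, hγs⟩ := fund_pow_rdiv hatomic hΔ ls hls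
  refine ⟨Δ ^ lr.length * γs, Δ ^ ls.length * γr, ?_⟩
  rw [mul_assoc, ← hγr, mul_assoc, ← hγs, ← pow_add, ← pow_add, Nat.add_comm]

end Aux


/-- Let `L` be a finite alphabet and `R` a finite set of relations between nonempty positive
words. If the presented monoid `G⁺ = ⟨L ∣ R⟩₊` is atomic, cancellative and has a fundamental
element, then the localization homomorphism `π : G⁺ → G = ⟨L ∣ R⟩` is injective. -/
theorem locHom_injective {L : Type} [Finite L]
    (R : Set (FreeMonoid L × FreeMonoid L)) (hRfin : R.Finite)
    (hRpos : ∀ p ∈ R, p.1 ≠ 1 ∧ p.2 ≠ 1)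
    (hatomic : ∃ ν : PresentedMonoid (fun u v => (u, v) ∈ R) → ℕ,
      (∀ α, ν α = 0 ↔ α = 1) ∧ ∀ α β, ν α + ν β ≤ ν (α * β))
    (hcancel : ∀ a x y b : PresentedMonoid (fun u v => (u, v) ∈ R),
      a * x * b = a * y * b → x = y)
    (hfund : ∃ Δ : PresentedMonoid (fun u v => (u, v) ∈ R), IsFundamental Δ) :
    Function.Injective (locHom (fun u v => (u, v) ∈ R)) := by
  classical
  obtain ⟨Δ, hΔ⟩ := hfund
  have hlc : ∀ a x y : PresentedMonoid (fun u v => (u, v) ∈ R), a * x = a * y → x = y :=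
    fun a x y h => hcancel a x y 1 (by simpa using h)
  have hrc : ∀ x y b : PresentedMonoid (fun u v => (u, v) ∈ R), x * b = y * b → x = y :=
    fun x y b h => hcancel 1 x y b (by simpa using h)
  have hOre := common_left_mul hatomic hΔ
  choose num den hnd using hOre
  letI : OreLocalization.OreSet (⊤ : Submonoid (PresentedMonoid (fun u v => (u, v) ∈ R))) :=
    { ore_right_cancel := fun r₁ r₂ s h => ⟨1, by rw [hrc r₁ r₂ s h]⟩
      oreNum := fun r s => num r s
      oreDenom := fun r s => ⟨den r s, trivial⟩
      ore_eq := fun r s => hnd r s }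
  have hinj : Function.Injective (OreLocalization.numeratorHom
      (R := PresentedMonoid (fun u v => (u, v) ∈ R))
      (S := (⊤ : Submonoid (PresentedMonoid (fun u v => (u, v) ∈ R))))) := by
    intro x y h
    rw [OreLocalization.numeratorHom_apply, OreLocalization.numeratorHom_apply,
      OreLocalization.oreDiv_eq_iff] at h
    obtain ⟨u, v, h1, h2⟩ := h
    have hu : (u : PresentedMonoid (fun u v => (u, v) ∈ R)) = v := by
      simpa using h2
    rw [Submonoid.smul_def, smul_eq_mul, hu] at h1
    exact (hlc v y x h1).symm
  have hunit : ∀ m : PresentedMonoid (fun u v => (u, v) ∈ R), IsUnit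
      (OreLocalization.numeratorHom
        (S := (⊤ : Submonoid (PresentedMonoid (fun u v => (u, v) ∈ R)))) m) :=
    fun m => OreLocalization.numerator_isUnit
      (⟨m, trivial⟩ : (⊤ : Submonoid (PresentedMonoid (fun u v => (u, v) ∈ R))))
  let hu : PresentedMonoid (fun u v => (u, v) ∈ R) →*
      (OreLocalization (⊤ : Submonoid (PresentedMonoid (fun u v => (u, v) ∈ R)))
        (PresentedMonoid (fun u v => (u, v) ∈ R)))ˣ :=
    { toFun := fun m => (hunit m).unit
      map_one' := by ext; simp; exact OreLocalization.one_def.symm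
      map_mul' := fun x y => by ext; simp }
  set f : L → (OreLocalization (⊤ : Submonoid (PresentedMonoid (fun u v => (u, v) ∈ R)))
      (PresentedMonoid (fun u v => (u, v) ∈ R)))ˣ :=
    fun x => hu (PresentedMonoid.of _ x) with hf
  have hcomp : (FreeGroup.lift f).comp (iotaFG L) =
      hu.comp (PresentedMonoid.mk (fun u v => (u, v) ∈ R)) :=
    FreeMonoid.hom_eq (fun x => by simp [iotaFG, hf, PresentedMonoid.of])
  have hrel : ∀ r ∈ grels (fun u v : FreeMonoid L => (u, v) ∈ R), FreeGroup.lift f r = 1 := by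
    rintro r ⟨w₁, w₂, hw, rfl⟩
    have hmk : PresentedMonoid.mk (fun u v : FreeMonoid L => (u, v) ∈ R) w₁ =
        PresentedMonoid.mk (fun u v : FreeMonoid L => (u, v) ∈ R) w₂ :=
      Quotient.sound (ConGen.Rel.of _ _ hw)
    have e : ∀ w, FreeGroup.lift f (iotaFG L w) =
        hu (PresentedMonoid.mk (fun u v : FreeMonoid L => (u, v) ∈ R) w) :=
      fun w => DFunLike.congr_fun hcomp w
    rw [map_mul, map_inv, e, e, hmk, inv_mul_cancel]
  have hfact : ∀ m, (PresentedGroup.toGroup hrel) (locHom (fun u v => (u, v) ∈ R) m) = hu m := by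
    have key : (PresentedGroup.toGroup hrel).comp (locHom (fun u v => (u, v) ∈ R)) = hu := by
      apply PresentedMonoid.ext
      intro x
      show (PresentedGroup.toGroup hrel) (locHom (fun u v => (u, v) ∈ R)
        (PresentedMonoid.of _ x)) = hu (PresentedMonoid.of _ x)
      have : locHom (fun u v => (u, v) ∈ R) (PresentedMonoid.of _ x) = PresentedGroup.of x := rfl
      rw [this]
      exact PresentedGroup.toGroup.of hrel
    exact fun m => DFunLike.congr_fun key m
  intro a b hab
  have h1 : hu a = hu b := by rw [← hfact, ← hfact, hab]
  have h2 : OreLocalization.numeratorHom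
      (S := (⊤ : Submonoid (PresentedMonoid (fun u v => (u, v) ∈ R)))) a =
      OreLocalization.numeratorHom
      (S := (⊤ : Submonoid (PresentedMonoid (fun u v => (u, v) ∈ R)))) b := by
    have := congrArg (Units.val) h1
    simpa only [hu, MonoidHom.coe_mk, OneHom.coe_mk, IsUnit.unit_spec] using this
  exact hinj h2
end

section
/- For integers m, n ≥ 1, if the monoid G⁺_{m,n} is left cancellative (a·x = a·y implies x = y for all a, x, y), then it is right cancellative (x·a = y·a implies x = y for all a, x, y). -/
namespace Gmn
/-- Generators of `G_{m,n}`: `s`, `t 1, …, t m`, `u 1, …, u n`. -/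
inductive Gen (m n : ℕ) : Type
  | s : Gen m n
  | t : Fin m → Gen m n
  | u : Fin n → Gen m n

/-- The word `s · t 1 ⋯ t m`. -/
def wordT (m n : ℕ) : List (Gen m n) := Gen.s :: List.ofFn (fun i => Gen.t i)

/-- The word `s · u 1 ⋯ u n`. -/
def wordU (m n : ℕ) : List (Gen m n) := Gen.s :: List.ofFn (fun j => Gen.u j)

/-- The word `s · t 1 ⋯ t m · u 1 ⋯ u n`. -/
def wordFull (m n : ℕ) : List (Gen m n) :=
  Gen.s :: (List.ofFn (fun i => Gen.t i) ++ List.ofFn (fun j => Gen.u j))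

/-- The defining relations of `G_{m,n}`: all cyclic rotations of `s·t_1⋯t_m` are equal,
all cyclic rotations of `s·u_1⋯u_n` are equal, and `t_i · u_j = u_j · t_i` for all `i, j`. -/
inductive Rel (m n : ℕ) : FreeMonoid (Gen m n) → FreeMonoid (Gen m n) → Prop
  | rotT (j : ℕ) :
      Rel m n (FreeMonoid.ofList (wordT m n)) (FreeMonoid.ofList ((wordT m n).rotate j))
  | rotU (j : ℕ) :
      Rel m n (FreeMonoid.ofList (wordU m n)) (FreeMonoid.ofList ((wordU m n).rotate j))
  | comm (i : Fin m) (j : Fin n) :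
      Rel m n (FreeMonoid.of (Gen.t i) * FreeMonoid.of (Gen.u j))
        (FreeMonoid.of (Gen.u j) * FreeMonoid.of (Gen.t i))

/-- The presented monoid `G⁺_{m,n}`. -/
abbrev GP (m n : ℕ) := PresentedMonoid (Rel m n)

/-- The image of a generator in `G⁺_{m,n}`. -/
abbrev gen {m n : ℕ} (g : Gen m n) : GP m n := PresentedMonoid.of (Rel m n) g

/-- The element `Δ = s · t_1 ⋯ t_m · u_1 ⋯ u_n` of `G⁺_{m,n}`. -/
def Delta (m n : ℕ) : GP m n :=
  PresentedMonoid.mk (Rel m n) (FreeMonoid.ofList (wordFull m n))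

/-- The reversing permutation on generators. -/
def sig {m n : ℕ} : Gen m n → Gen m n
  | .s => .s
  | .t i => .t i.rev
  | .u j => .u j.rev

lemma sig_sig {m n : ℕ} (g : Gen m n) : sig (sig g) = g := by
  cases g <;> simp [sig]

lemma ofFn_rev' {β : Type*} {k : ℕ} (f : Fin k → β) :
    List.ofFn (fun i => f i.rev) = (List.ofFn f).reverse := by
  apply List.ext_getElem
  · simp
  · intro i h1 h2
    simp only [List.getElem_ofFn, List.getElem_reverse, List.length_ofFn] at *
    congr 1
    ext
    simp [Fin.rev]
    omega

lemma rel_eq {m n : ℕ} {a b : FreeMonoid (Gen m n)} (h : Rel m n a b) :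
    PresentedMonoid.mk (Rel m n) a = PresentedMonoid.mk (Rel m n) b :=
  Quotient.sound (ConGen.Rel.of _ _ h)

/-- mk of any rotation of wordT equals mk of wordT. -/
lemma mk_rotT {m n : ℕ} (j : ℕ) :
    PresentedMonoid.mk (Rel m n) (FreeMonoid.ofList ((wordT m n).rotate j)) =
      PresentedMonoid.mk (Rel m n) (FreeMonoid.ofList (wordT m n)) :=
  (rel_eq (Rel.rotT j)).symm

lemma mk_rotU {m n : ℕ} (j : ℕ) :
    PresentedMonoid.mk (Rel m n) (FreeMonoid.ofList ((wordU m n).rotate j)) =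
      PresentedMonoid.mk (Rel m n) (FreeMonoid.ofList (wordU m n)) :=
  (rel_eq (Rel.rotU j)).symm

/-- sig-reverse of wordT is wordT.rotate 1. -/
lemma sig_rev_wordT {m n : ℕ} : ((wordT m n).map sig).reverse = (wordT m n).rotate 1 := by
  simp only [wordT, List.map_cons, List.map_ofFn, List.rotate_cons_succ, List.rotate_zero,
    List.reverse_cons]
  rw [show (sig ∘ fun i : Fin m => (Gen.t i : Gen m n)) = (fun i => Gen.t i.rev) from rfl,
    ofFn_rev', List.reverse_reverse, show sig (Gen.s : Gen m n) = Gen.s from rfl]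

lemma sig_rev_wordU {m n : ℕ} : ((wordU m n).map sig).reverse = (wordU m n).rotate 1 := by
  simp only [wordU, List.map_cons, List.map_ofFn, List.rotate_cons_succ, List.rotate_zero,
    List.reverse_cons]
  rw [show (sig ∘ fun j : Fin n => (Gen.u j : Gen m n)) = (fun j => Gen.u j.rev) from rfl,
    ofFn_rev', List.reverse_reverse, show sig (Gen.s : Gen m n) = Gen.s from rfl]

lemma sigrev_rotT {m n : ℕ} (j : ℕ) :
    PresentedMonoid.mk (Rel m n) (FreeMonoid.ofList ((((wordT m n).rotate j).map sig).reverse)) =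
      PresentedMonoid.mk (Rel m n) (FreeMonoid.ofList (((wordT m n).map sig).reverse)) := by
  rw [List.map_rotate, List.reverse_rotate, sig_rev_wordT, List.rotate_rotate, mk_rotT, mk_rotT]

lemma sigrev_rotU {m n : ℕ} (j : ℕ) :
    PresentedMonoid.mk (Rel m n) (FreeMonoid.ofList ((((wordU m n).rotate j).map sig).reverse)) =
      PresentedMonoid.mk (Rel m n) (FreeMonoid.ofList (((wordU m n).map sig).reverse)) := by
  rw [List.map_rotate, List.reverse_rotate, sig_rev_wordU, List.rotate_rotate, mk_rotU, mk_rotU]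

open MulOpposite in
/-- The lift of generators for the anti-automorphism. -/
def fGen (m n : ℕ) : Gen m n → (GP m n)ᵐᵒᵖ := fun g => op (gen (sig g))

open MulOpposite in
lemma f_ofList {m n : ℕ} (l : List (Gen m n)) :
    FreeMonoid.lift (fGen m n) (FreeMonoid.ofList l) =
      op (PresentedMonoid.mk (Rel m n) (FreeMonoid.ofList ((l.map sig).reverse))) := by
  induction l with
  | nil => rfl
  | cons a l ih =>
      rw [FreeMonoid.ofList_cons, map_mul, ih, List.map_cons, List.reverse_cons,
        FreeMonoid.ofList_append, map_mul, FreeMonoid.lift_eval_of]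
      show op (gen (sig a)) * _ = _
      rw [← op_mul]
      rfl

open MulOpposite in
lemma f_compat {m n : ℕ} : ∀ a b : FreeMonoid (Gen m n), Rel m n a b →
    FreeMonoid.lift (fGen m n) a = FreeMonoid.lift (fGen m n) b := by
  intro a b h
  cases h with
  | rotT j => rw [f_ofList, f_ofList, sigrev_rotT]
  | rotU j => rw [f_ofList, f_ofList, sigrev_rotU]
  | comm i j =>
      rw [map_mul, map_mul]
      show op (gen (Gen.t i.rev)) * op (gen (Gen.u j.rev)) =
        op (gen (Gen.u j.rev)) * op (gen (Gen.t i.rev))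
      rw [← op_mul, ← op_mul]
      exact congrArg op (rel_eq (Rel.comm i.rev j.rev)).symm

open MulOpposite in
/-- The anti-automorphism `ψ`. -/
def psi {m n : ℕ} (x : GP m n) : GP m n :=
  (PresentedMonoid.lift (fGen m n) f_compat x).unop

open MulOpposite in
lemma psi_mk {m n : ℕ} (l : List (Gen m n)) :
    psi (PresentedMonoid.mk (Rel m n) (FreeMonoid.ofList l)) =
      PresentedMonoid.mk (Rel m n) (FreeMonoid.ofList ((l.map sig).reverse)) := by
  show (FreeMonoid.lift (fGen m n) (FreeMonoid.ofList l)).unop = _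
  rw [f_ofList, unop_op]

lemma psi_mul {m n : ℕ} (x y : GP m n) : psi (x * y) = psi y * psi x := by
  unfold psi
  rw [map_mul]
  rfl

lemma psi_psi {m n : ℕ} (x : GP m n) : psi (psi x) = x := by
  refine PresentedMonoid.inductionOn x fun a => ?_
  · have : a = FreeMonoid.ofList a.toList := rfl
    rw [this, psi_mk, psi_mk]
    congr 1
    simp [List.map_reverse, List.map_map, Function.comp_def, sig_sig]

/-- For `m, n ≥ 1`, if the monoid `G⁺_{m,n}` is left cancellative then it is right
cancellative. -/
theorem left_cancel_imp_right_cancel (m n : ℕ) (hm : 1 ≤ m) (hn : 1 ≤ n)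
    (hleft : ∀ a x y : GP m n, a * x = a * y → x = y) :
    ∀ a x y : GP m n, x * a = y * a → x = y := by
  intro a x y h
  have h2 : psi a * psi x = psi a * psi y := by
    rw [← psi_mul, ← psi_mul, h]
  have h3 := hleft _ _ _ h2
  have := congrArg psi h3
  rwa [psi_psi, psi_psi] at this


end Gmn
end
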